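/- For the n-th Hermite function \psi_n(x) = (-1)^n (2^n n! \sqrt{\pi})^{-1/2} e^{x^2/2} (d/dx)^n e^{-x^2}, the Hamiltonian H = (1/2)(x^2 - d^2/dx^2) satisfies H\psi_n = (n + 1/2)\psi_n. -/

import Mathlib

/-- The `n`-th Hermite function, via the Rodrigues formula. -/
noncomputable def hermiteFun (n : ℕ) : ℝ → ℝ := fun x =>
  (-1 : ℝ) ^ n * (Real.sqrt (2 ^ n * n.factorial * Real.sqrt Real.pi))⁻¹ *
    Real.exp (x ^ 2 / 2) * iteratedDeriv n (fun t => Real.exp (-t ^ 2)) x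

open Polynomial

noncomputable def Hph : ℕ → Polynomial ℝ
  | 0 => 1
  | n + 1 => 2 * X * Hph n - derivative (Hph n)

lemma HphSucc (n : ℕ) : Hph (n + 1) = 2 * X * Hph n - derivative (Hph n) := rfl

lemma derivHph (n : ℕ) : derivative (Hph (n + 1)) = C (2 * ((n : ℝ) + 1)) * Hph n := by
  induction n with
  | zero =>
    rw [HphSucc, show Hph 0 = 1 from rfl]
    simp
    rw [← map_ofNat C 2]
  | succ n ih =>
    simp only [HphSucc (n+1), derivative_sub, derivative_mul, ih, derivative_C,
      derivative_ofNat, derivative_X, zero_mul, mul_one, zero_add, mul_zero,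
      derivative_one]
    rw [HphSucc n]
    push_cast
    simp only [C_add, C_mul, C_1, map_ofNat]
    ring

lemma odeHph (n : ℕ) : derivative (derivative (Hph n)) =
    2 * X * derivative (Hph n) - C (2 * (n : ℝ)) * Hph n := by
  cases n with
  | zero => simp [Hph]
  | succ n =>
    rw [derivHph, derivative_mul, derivative_C, zero_mul, zero_add, HphSucc n]
    push_cast
    ring

lemma deriv_gauss_eq (n : ℕ) (x : ℝ) :
    deriv^[n] (fun t => Real.exp (-t ^ 2)) x =
      (-1 : ℝ) ^ n * aeval x (Hph n) * Real.exp (-x ^ 2) := by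
  rw [mul_assoc]
  induction n generalizing x with
  | zero => simp [Hph]
  | succ n ih =>
    replace ih : deriv^[n] _ = _ := funext ih
    have dg : deriv (fun t : ℝ => Real.exp (-t ^ 2)) x = -2 * x * Real.exp (-x ^ 2) := by
      rw [deriv_exp (by fun_prop)]
      simp
      ring
    rw [Function.iterate_succ_apply', ih, deriv_const_mul_field, deriv_fun_mul
      (Polynomial.differentiable_aeval _).differentiableAt (by fun_prop),
      pow_succ (-1 : ℝ), dg, HphSucc, map_sub, map_mul, map_mul, aeval_X,
      Polynomial.deriv_aeval]
    simp only [map_ofNat]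
    ring

lemma gderiv (p : Polynomial ℝ) :
    deriv (fun x => aeval x p * Real.exp (-x ^ 2 / 2)) =
      fun x => aeval x (derivative p - X * p) * Real.exp (-x ^ 2 / 2) := by
  funext x
  have dE : deriv (fun x : ℝ => Real.exp (-x ^ 2 / 2)) x = -x * Real.exp (-x ^ 2 / 2) := by
    rw [deriv_exp (by fun_prop)]
    simp [deriv_div_const]
    ring
  rw [deriv_fun_mul (Polynomial.differentiable_aeval _).differentiableAt (by fun_prop), dE,
    Polynomial.deriv_aeval, map_sub, map_mul, aeval_X]
  ring

lemma hermiteFun_eq (n : ℕ) : hermiteFun n = fun x =>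
    aeval x (C (Real.sqrt (2 ^ n * n.factorial * Real.sqrt Real.pi))⁻¹ * Hph n) *
      Real.exp (-x ^ 2 / 2) := by
  funext x
  rw [hermiteFun, iteratedDeriv_eq_iterate, deriv_gauss_eq, map_mul, aeval_C]
  have : Real.exp (x ^ 2 / 2) * Real.exp (-x ^ 2) = Real.exp (-x ^ 2 / 2) := by
    rw [← Real.exp_add]; congr 1; ring
  have h1 : ((-1 : ℝ) ^ n) * (-1 : ℝ) ^ n = 1 := by
    rw [← pow_add]; exact (neg_one_pow_eq_one_iff_even (by norm_num)).2 ⟨n, rfl⟩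
  simp only [Algebra.algebraMap_self_apply]
  calc (-1 : ℝ) ^ n * (Real.sqrt (2 ^ n * n.factorial * Real.sqrt Real.pi))⁻¹ *
      Real.exp (x ^ 2 / 2) * ((-1) ^ n * aeval x (Hph n) * Real.exp (-x ^ 2))
      = ((-1 : ℝ) ^ n * (-1) ^ n) * ((Real.sqrt (2 ^ n * n.factorial * Real.sqrt Real.pi))⁻¹ *
        aeval x (Hph n) * (Real.exp (x ^ 2 / 2) * Real.exp (-x ^ 2))) := by ring
    _ = _ := by rw [h1, this]; ring

theorem hamiltonian_hermiteFun (n : ℕ) (x : ℝ) :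
    (1 / 2) * (x ^ 2 * hermiteFun n x - iteratedDeriv 2 (hermiteFun n) x) =
      ((n : ℝ) + 1 / 2) * hermiteFun n x := by
  rw [show (2 : ℕ) = 1 + 1 from rfl, iteratedDeriv_succ, iteratedDeriv_one, hermiteFun_eq,
    gderiv, gderiv]
  have hode := congrArg (aeval x) (odeHph n)
  simp only [map_sub, map_mul, aeval_X, aeval_C, map_ofNat, derivative_sub, derivative_mul,
    derivative_C, derivative_X, zero_mul, one_mul, zero_add, map_add,
    Algebra.algebraMap_self_apply] at hode ⊢
  linear_combination ((-1 / 2) * Real.exp (-x ^ 2 / 2) *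
    (Real.sqrt (2 ^ n * n.factorial * Real.sqrt Real.pi))⁻¹) * hode
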